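/- For the type C_2 with exponents 1 and 3 and dimension 10, and a hyperbolic triple (a,b,c), the sum Σ_{k∈{a,b,c}} [(1 + 2⌊1/k⌋) + (1 + 2⌊3/k⌋)] is strictly less than 10 if and only if b ≥ 4 (equivalently, b ≠ 3); when b = 3 the sum equals 10. -/
import Mathlib


theorem typeC2_inequality (a b c : ℕ) (ha : 0 < a) (hab : a ≤ b) (hbc : b ≤ c)
    (hhyp : (1 : ℚ)/a + 1/b + 1/c < 1) :
    (((1 + 2 * (1 / a)) + (1 + 2 * (3 / a))) + ((1 + 2 * (1 / b)) + (1 + 2 * (3 / b)))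
        + ((1 + 2 * (1 / c)) + (1 + 2 * (3 / c))) < 10 ↔ 4 ≤ b) ∧
    (b = 3 →
      ((1 + 2 * (1 / a)) + (1 + 2 * (3 / a))) + ((1 + 2 * (1 / b)) + (1 + 2 * (3 / b)))
        + ((1 + 2 * (1 / c)) + (1 + 2 * (3 / c))) = 10) := by
  have hb : 0 < b := lt_of_lt_of_le ha hab
  have hc : 0 < c := lt_of_lt_of_le hb hbc
  have haq : (0:ℚ) < a := by exact_mod_cast ha
  have hbq : (0:ℚ) < b := by exact_mod_cast hb
  have hcq : (0:ℚ) < c := by exact_mod_cast hc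
  have hbq' : (0:ℚ) < 1 / b := by positivity
  have hcq' : (0:ℚ) < 1 / c := by positivity
  have habq : (a:ℚ) ≤ b := by exact_mod_cast hab
  have hbcq : (b:ℚ) ≤ c := by exact_mod_cast hbc
  have ha2 : 2 ≤ a := by
    by_contra h
    push_neg at h
    interval_cases a
    · simp at hhyp
      have h1 : (0:ℚ) < (b:ℚ)⁻¹ := inv_pos.mpr hbq
      have h2 : (0:ℚ) < (c:ℚ)⁻¹ := inv_pos.mpr hcq
      linarith
  have haq2 : (1:ℚ)/a ≤ 1/2 := by
    apply div_le_div_of_nonneg_left (by norm_num) (by norm_num)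
    exact_mod_cast ha2
  have hb3 : 3 ≤ b := by
    by_contra h
    push_neg at h
    have hb2 : b = 2 := by omega
    have ha2' : a = 2 := by omega
    subst hb2; subst ha2'
    norm_num at hhyp
    linarith
  have hbq3 : (1:ℚ)/b ≤ 1/3 := by
    apply div_le_div_of_nonneg_left (by norm_num) (by norm_num)
    exact_mod_cast hb3
  have hc3 : 3 ≤ c := le_trans hb3 hbc
  have h1a : 1 / a = 0 := Nat.div_eq_of_lt ha2
  have h1b : 1 / b = 0 := Nat.div_eq_of_lt (by omega)
  have h1c : 1 / c = 0 := Nat.div_eq_of_lt (by omega)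
  rcases eq_or_lt_of_le hb3 with hb3e | hb4
  · -- b = 3
    have hbe : b = 3 := hb3e.symm
    have hc4 : 4 ≤ c := by
      by_contra h
      push_neg at h
      have : c = 3 := by omega
      subst this
      have hbe3 : (b:ℚ) = 3 := by rw [hbe]; norm_num
      have : (1:ℚ)/a ≥ 1/3 := by
        apply div_le_div_of_nonneg_left (by norm_num) haq
        exact_mod_cast le_trans hab hbc
      rw [hbe3] at hhyp
      rw [one_div] at this
      norm_num at hhyp
      linarith
    have h3a : 3 / a = 1 := by
      have : a ≤ 3 := by omega
      interval_cases a <;> norm_num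
    have h3b : 3 / b = 1 := by rw [hbe]
    have h3c : 3 / c = 0 := Nat.div_eq_of_lt (by omega)
    rw [h1a, h1b, h1c, h3a, h3b, h3c, hbe]
    norm_num
  · -- b ≥ 4
    have h3b : 3 / b = 0 := Nat.div_eq_of_lt (by omega)
    have h3c : 3 / c = 0 := Nat.div_eq_of_lt (by omega)
    have h3a : 3 / a ≤ 1 := Nat.div_le_div_left ha2 (by norm_num) |>.trans (by norm_num)
    rw [h1a, h1b, h1c, h3b, h3c]
    constructor
    · constructor
      · intro _; omega
      · intro _; omega
    · intro hbe; omega
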